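/- Let f : ℝ → [0,∞) be continuous with v_f(θ,x) < ∞ for all (θ,x) ∈ [0,T0]×ℝ, where T0 > 0. Suppose there exists a continuous function θ̆ : ℝ → [0,T0] such that am_{T0}(f)(x) = v_f(θ̆(x), x) for every x ∈ ℝ, i.e. the infimum defining am_{T0}(f) is attained at θ̆(x). Then the function x ↦ am_{T0}(f)(x) is continuous on ℝ. -/

import Mathlib

open MeasureTheory Filter Set
open scoped ENNReal

/-- Gaussian density with mean `m` and variance `s2`. -/
noncomputable def gauss (m s2 y : ℝ) : ℝ :=
  (Real.sqrt (2 * Real.pi * s2))⁻¹ * Real.exp (-((y - m) ^ 2) / (2 * s2))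

/-- European value of a payoff function `f`:
`v_f(θ,x) = e^{-rθ} ∫ N(x+r̂θ,σ²θ,y) f(y) dy` for `θ > 0`, `v_f(0,x) = f(x)`. -/
noncomputable def vEu (r σ : ℝ) (f : ℝ → ℝ) (θ x : ℝ) : ℝ :=
  if θ = 0 then f x
  else Real.exp (-(r * θ)) * ∫ y, gauss (x + (r - σ ^ 2 / 2) * θ) (σ ^ 2 * θ) y * f y


set_option maxHeartbeats 1000000
lemma gauss_nonneg (m s2 y : ℝ) : 0 ≤ gauss m s2 y := by
  unfold gauss; positivity

lemma gauss_sqrt_factor {s2 S : ℝ} (hs : 0 < s2) (hS : 0 < S) :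
    (Real.sqrt (2*Real.pi*s2))⁻¹ = Real.sqrt (S/s2) * (Real.sqrt (2*Real.pi*S))⁻¹ := by
  rw [← Real.sqrt_inv, ← Real.sqrt_inv, ← Real.sqrt_mul (by positivity)]
  congr 1
  have := Real.pi_pos
  field_simp

lemma gauss_le_far {m s2 S y δ : ℝ} (hs : 0 < s2) (hsS : s2 ≤ S) (hδ : 0 ≤ δ)
    (hy : δ ≤ |y - m|) :
    gauss m s2 y ≤ Real.sqrt (S/s2) * Real.exp (-(δ^2) * (1/(2*s2) - 1/(2*S))) * gauss m S y := by
  have hS : 0 < S := hs.trans_le hsS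
  unfold gauss
  rw [gauss_sqrt_factor hs hS]
  have h1 : δ^2 ≤ (y-m)^2 := by
    have := pow_le_pow_left₀ hδ hy 2
    rwa [sq_abs] at this
  have h2 : 0 ≤ 1/(2*s2) - 1/(2*S) := by
    have : 1/(2*S) ≤ 1/(2*s2) := by gcongr
    linarith
  have h3 : (y-m)^2/(2*s2) - (y-m)^2/(2*S) = (y-m)^2 * (1/(2*s2)-1/(2*S)) := by
    field_simp
  have key : Real.exp (-((y-m)^2)/(2*s2)) ≤
      Real.exp (-(δ^2) * (1/(2*s2)-1/(2*S))) * Real.exp (-((y-m)^2)/(2*S)) := by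
    rw [← Real.exp_add, Real.exp_le_exp]
    have h5 : δ^2 * (S - s2) ≤ (y-m)^2 * (S - s2) :=
      mul_le_mul_of_nonneg_right h1 (by linarith)
    rw [show -δ ^ 2 * (1 / (2 * s2) - 1 / (2 * S)) + -(y - m) ^ 2 / (2 * S)
        = (-(δ^2*(S-s2)) - (y-m)^2*s2)/(2*s2*S) from by field_simp; ring,
      show -(y - m) ^ 2 / (2 * s2) = (-((y-m)^2*S))/(2*s2*S) from by field_simp,
      div_le_div_iff_of_pos_right (by positivity)]
    linarith
  have h0 : 0 ≤ Real.sqrt (S/s2) * (Real.sqrt (2*Real.pi*S))⁻¹ := by positivity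
  calc Real.sqrt (S/s2) * (Real.sqrt (2*Real.pi*S))⁻¹ * Real.exp (-((y-m)^2)/(2*s2))
      ≤ Real.sqrt (S/s2) * (Real.sqrt (2*Real.pi*S))⁻¹ *
        (Real.exp (-(δ^2) * (1/(2*s2)-1/(2*S))) * Real.exp (-((y-m)^2)/(2*S))) :=
        mul_le_mul_of_nonneg_left key h0
    _ = Real.sqrt (S/s2) * Real.exp (-(δ^2) * (1/(2*s2)-1/(2*S))) *
        ((Real.sqrt (2*Real.pi*S))⁻¹ * Real.exp (-((y-m)^2)/(2*S))) := by ring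

lemma gauss_le_shift {m s2 S a b y : ℝ} (hs : 0 < s2) (hsS : s2 ≤ S)
    (ham : a ≤ m) (hmb : m ≤ b) :
    gauss m s2 y ≤ Real.sqrt (S/s2) * Real.exp ((b-a)^2/(2*S)) * (gauss a S y + gauss b S y) := by
  have hS : 0 < S := hs.trans_le hsS
  have hexple : Real.exp (-((y-m)^2)/(2*s2)) ≤ Real.exp (-((y-m)^2)/(2*S)) := by
    rw [Real.exp_le_exp]
    rw [div_le_div_iff₀ (by positivity) (by positivity)]
    nlinarith [sq_nonneg (y-m)]
  have hK : (1:ℝ) ≤ Real.exp ((b-a)^2/(2*S)) := by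
    rw [← Real.exp_zero]; apply Real.exp_le_exp.2; positivity
  have hfac : 0 ≤ (Real.sqrt (2*Real.pi*S))⁻¹ := by positivity
  have hmain : Real.exp (-((y-m)^2)/(2*S)) ≤ Real.exp ((b-a)^2/(2*S)) *
      (Real.exp (-((y-a)^2)/(2*S)) + Real.exp (-((y-b)^2)/(2*S))) := by
    rcases le_total y m with hym | hym
    · have hsq : (y-a)^2 ≤ (y-m)^2 + (b-a)^2 := by
        nlinarith [mul_nonneg (sub_nonneg.2 ham) (sub_nonneg.2 hym),
          mul_nonneg (sub_nonneg.2 hmb) (sub_nonneg.2 (ham.trans hmb))]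
      have : Real.exp (-((y-m)^2)/(2*S)) ≤
          Real.exp ((b-a)^2/(2*S)) * Real.exp (-((y-a)^2)/(2*S)) := by
        rw [← Real.exp_add, Real.exp_le_exp]
        rw [div_add_div _ _ (by positivity) (by positivity), div_le_div_iff₀ (by positivity) (by positivity)]
        nlinarith [sq_nonneg (y-a)]
      calc Real.exp (-((y-m)^2)/(2*S)) ≤ Real.exp ((b-a)^2/(2*S)) * Real.exp (-((y-a)^2)/(2*S)) := this
        _ ≤ _ := by nlinarith [Real.exp_pos ((b-a)^2/(2*S)), Real.exp_pos (-((y-b)^2)/(2*S))]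
    · have hsq : (y-b)^2 ≤ (y-m)^2 + (b-a)^2 := by
        nlinarith [mul_nonneg (sub_nonneg.2 hmb) (sub_nonneg.2 hym),
          mul_nonneg (sub_nonneg.2 ham) (sub_nonneg.2 (ham.trans hmb))]
      have : Real.exp (-((y-m)^2)/(2*S)) ≤
          Real.exp ((b-a)^2/(2*S)) * Real.exp (-((y-b)^2)/(2*S)) := by
        rw [← Real.exp_add, Real.exp_le_exp]
        rw [div_add_div _ _ (by positivity) (by positivity), div_le_div_iff₀ (by positivity) (by positivity)]
        nlinarith [sq_nonneg (y-b)]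
      calc Real.exp (-((y-m)^2)/(2*S)) ≤ Real.exp ((b-a)^2/(2*S)) * Real.exp (-((y-b)^2)/(2*S)) := this
        _ ≤ _ := by nlinarith [Real.exp_pos ((b-a)^2/(2*S)), Real.exp_pos (-((y-a)^2)/(2*S))]
  unfold gauss
  rw [gauss_sqrt_factor hs hS]
  calc Real.sqrt (S/s2) * (Real.sqrt (2*Real.pi*S))⁻¹ * Real.exp (-((y-m)^2)/(2*s2))
      ≤ Real.sqrt (S/s2) * (Real.sqrt (2*Real.pi*S))⁻¹ *
        (Real.exp ((b-a)^2/(2*S)) * (Real.exp (-((y-a)^2)/(2*S)) + Real.exp (-((y-b)^2)/(2*S)))) := by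
        apply mul_le_mul_of_nonneg_left (hexple.trans hmain) (by positivity)
    _ = Real.sqrt (S/s2) * Real.exp ((b-a)^2/(2*S)) *
        ((Real.sqrt (2*Real.pi*S))⁻¹ * Real.exp (-((y-a)^2)/(2*S)) +
         (Real.sqrt (2*Real.pi*S))⁻¹ * Real.exp (-((y-b)^2)/(2*S))) := by ring

lemma eta_tendsto {S k : ℝ} (hS : 0 < S) (hk : 0 < k) :
    Filter.Tendsto (fun s2 : ℝ => Real.sqrt (S/s2) * Real.exp (-k * (1/(2*s2) - 1/(2*S))))
      (nhdsWithin 0 (Set.Ioi 0)) (nhds 0) := by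
  have hbase : Tendsto (fun u : ℝ => u ^ (1/2 : ℝ) * Real.exp (-(k/2) * u)) atTop (nhds 0) :=
    tendsto_rpow_mul_exp_neg_mul_atTop_nhds_zero _ _ (by positivity)
  have hsqrt : Tendsto (fun u : ℝ => Real.sqrt u * Real.exp (-(k/2) * u)) atTop (nhds 0) := by
    apply hbase.congr
    intro u
    rw [Real.sqrt_eq_rpow]
  have hcomp : Tendsto (fun s2 : ℝ => Real.sqrt s2⁻¹ * Real.exp (-(k/2) * s2⁻¹))
      (nhdsWithin 0 (Set.Ioi 0)) (nhds 0) := hsqrt.comp tendsto_inv_nhdsGT_zero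
  have := (tendsto_const_nhds (x := Real.sqrt S * Real.exp (k/(2*S)))).mul hcomp
  rw [mul_zero] at this
  apply this.congr'
  filter_upwards [self_mem_nhdsWithin] with s2 (hs2 : (0:ℝ) < s2)
  rw [show S / s2 = S * s2⁻¹ by field_simp, Real.sqrt_mul hS.le,
    show -k * (1/(2*s2) - 1/(2*S)) = k/(2*S) + -(k/2) * s2⁻¹ by field_simp; ring,
    Real.exp_add]
  ring

lemma gauss_eq_pdf (m : ℝ) {s2 : ℝ} (hs : 0 ≤ s2) :
    gauss m s2 = ProbabilityTheory.gaussianPDFReal m ⟨s2, hs⟩ := by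
  ext y; simp [gauss, ProbabilityTheory.gaussianPDFReal]; rfl

lemma integrable_gauss (m : ℝ) {s2 : ℝ} (hs : 0 ≤ s2) : Integrable (gauss m s2) := by
  rw [gauss_eq_pdf m hs]; exact ProbabilityTheory.integrable_gaussianPDFReal m _

lemma integral_gauss (m : ℝ) {s2 : ℝ} (hs : 0 < s2) : ∫ y, gauss m s2 y = 1 := by
  rw [gauss_eq_pdf m hs.le]
  exact ProbabilityTheory.integral_gaussianPDFReal_eq_one m (fun h => hs.ne' (congrArg (fun x : NNReal => (x : ℝ)) h))

lemma continuous_gauss_y (m s2 : ℝ) : Continuous (gauss m s2) := by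
  unfold gauss; fun_prop

lemma continuousAt_gauss (y : ℝ) {q : ℝ × ℝ} (h : 0 < q.2) :
    ContinuousAt (fun q : ℝ × ℝ => gauss q.1 q.2 y) q := by
  unfold gauss
  have h1 : ContinuousAt (fun q : ℝ × ℝ => (Real.sqrt (2 * Real.pi * q.2))⁻¹) q := by
    apply ContinuousAt.inv₀ (by fun_prop)
    positivity
  have h2 : ContinuousAt (fun q : ℝ × ℝ => Real.exp (-((y - q.1) ^ 2) / (2 * q.2))) q := by
    apply Real.continuous_exp.continuousAt.comp
    exact ContinuousAt.div (by fun_prop) (by fun_prop) (by positivity)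
  exact h1.mul h2

lemma peak_estimate {S : ℝ} (hS : 0 < S) (f : ℝ → ℝ) (hf0 : ∀ x, 0 ≤ f x)
    (hint : ∀ (m : ℝ) (s2 : ℝ), 0 < s2 → s2 ≤ S → Integrable (fun y => gauss m s2 y * f y))
    (x0 : ℝ) {δ1 ε1 : ℝ} (hδ1 : 0 < δ1) (hδ11 : δ1 ≤ 1) (hε1 : 0 ≤ ε1)
    (hf : ∀ y, |y - x0| ≤ δ1 → |f y - f x0| ≤ ε1)
    {m s2 : ℝ} (hm : |m - x0| ≤ δ1/2) (hs2 : 0 < s2) (hs2S : s2 ≤ S) :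
    |(∫ y, gauss m s2 y * f y) - f x0| ≤ ε1 +
      Real.sqrt (S/s2) * Real.exp (-((δ1/2)^2) * (1/(2*s2) - 1/(2*S))) *
      (Real.exp ((2:ℝ)^2/(2*S)) * ((∫ y, gauss (x0-1) S y * f y) + ∫ y, gauss (x0+1) S y * f y)
        + f x0) := by
  set η := Real.sqrt (S/s2) * Real.exp (-((δ1/2)^2) * (1/(2*s2) - 1/(2*S))) with hη
  have hη0 : 0 ≤ η := by positivity
  set K := Real.exp ((2:ℝ)^2/(2*S)) with hK
  have hi1 : Integrable (fun y => gauss m s2 y * f y) := hint m s2 hs2 hs2S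
  have hig : Integrable (gauss m s2) := integrable_gauss m hs2.le
  have higS : Integrable (gauss m S) := integrable_gauss m hS.le
  have hi2 : Integrable (fun y => gauss m s2 y * f x0) := hig.mul_const _
  have hi3 : Integrable (fun y => gauss m s2 y * (f y - f x0)) := by
    have := hi1.sub hi2
    simpa [mul_sub, Pi.sub_def] using this
  have hiSf : Integrable (fun y => gauss m S y * f y) := hint m S hS le_rfl
  have hiSsum : Integrable (fun y => gauss m S y * (f y + f x0)) := by
    have := hiSf.add (higS.mul_const (f x0))
    simpa [mul_add, Pi.add_def] using this
  have hstep1 : (∫ y, gauss m s2 y * f y) - f x0 = ∫ y, gauss m s2 y * (f y - f x0) := by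
    rw [show (fun y => gauss m s2 y * (f y - f x0)) =
        fun y => gauss m s2 y * f y - gauss m s2 y * f x0 from funext fun y => by ring,
      integral_sub hi1 hi2, integral_mul_const, integral_gauss m hs2, one_mul]
  rw [hstep1]
  have habs : |∫ y, gauss m s2 y * (f y - f x0)| ≤ ∫ y, |gauss m s2 y * (f y - f x0)| := by
    simpa only [Real.norm_eq_abs] using
      norm_integral_le_integral_norm (μ := volume) (fun y => gauss m s2 y * (f y - f x0))
  set E := Metric.closedBall x0 δ1 with hE
  have hEmeas : MeasurableSet E := measurableSet_closedBall
  have hsplit : (∫ y, |gauss m s2 y * (f y - f x0)|) =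
      (∫ y in E, |gauss m s2 y * (f y - f x0)|) + ∫ y in Eᶜ, |gauss m s2 y * (f y - f x0)| :=
    (integral_add_compl hEmeas hi3.abs).symm
  -- near bound
  have hnear : (∫ y in E, |gauss m s2 y * (f y - f x0)|) ≤ ε1 := by
    have h1 : (∫ y in E, |gauss m s2 y * (f y - f x0)|) ≤ ∫ y in E, gauss m s2 y * ε1 := by
      apply setIntegral_mono_on hi3.abs.integrableOn ((hig.mul_const ε1).integrableOn) hEmeas
      intro y hy
      rw [abs_mul, abs_of_nonneg (gauss_nonneg _ _ _)]
      exact mul_le_mul_of_nonneg_left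
        (hf y (by simpa [Real.dist_eq] using Metric.mem_closedBall.1 hy)) (gauss_nonneg _ _ _)
    have h2 : (∫ y in E, gauss m s2 y * ε1) ≤ ∫ y, gauss m s2 y * ε1 := by
      apply setIntegral_le_integral (hig.mul_const ε1)
      filter_upwards with y using mul_nonneg (gauss_nonneg _ _ _) hε1
    have h3 : (∫ y, gauss m s2 y * ε1) = ε1 := by
      rw [integral_mul_const, integral_gauss m hs2, one_mul]
    linarith
  -- far bound
  have hfar : (∫ y in Eᶜ, |gauss m s2 y * (f y - f x0)|) ≤
      η * ((∫ y, gauss m S y * f y) + f x0) := by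
    have hpt : ∀ y ∈ Eᶜ, |gauss m s2 y * (f y - f x0)| ≤ η * (gauss m S y * (f y + f x0)) := by
      intro y hy
      have hyx : δ1 < |y - x0| := by
        have := Metric.mem_closedBall.not.1 hy
        rw [Real.dist_eq] at this
        linarith [not_le.1 this]
      have hym : δ1/2 ≤ |y - m| := by
        have := abs_sub_abs_le_abs_sub (y - x0) (m - x0)
        have h' : |y - x0 - (m - x0)| = |y - m| := by ring_nf
        rw [h'] at this
        linarith
      have hgle := gauss_le_far hs2 hs2S (by positivity : (0:ℝ) ≤ δ1/2) hym
      rw [abs_mul, abs_of_nonneg (gauss_nonneg _ _ _)]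
      have hfle : |f y - f x0| ≤ f y + f x0 := by
        have := abs_sub_abs_le_abs_sub (f y) (f x0)
        rw [abs_sub_le_iff]
        constructor <;> nlinarith [hf0 y, hf0 x0, abs_nonneg (f y - f x0)]
      calc gauss m s2 y * |f y - f x0| ≤ (η * gauss m S y) * (f y + f x0) := by
            exact mul_le_mul hgle hfle (abs_nonneg _) (mul_nonneg hη0 (gauss_nonneg _ _ _))
        _ = η * (gauss m S y * (f y + f x0)) := by ring
    have h1 : (∫ y in Eᶜ, |gauss m s2 y * (f y - f x0)|) ≤
        ∫ y in Eᶜ, η * (gauss m S y * (f y + f x0)) := by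
      apply setIntegral_mono_on hi3.abs.integrableOn ((hiSsum.const_mul η).integrableOn)
        hEmeas.compl hpt
    have h2 : (∫ y in Eᶜ, η * (gauss m S y * (f y + f x0))) ≤
        ∫ y, η * (gauss m S y * (f y + f x0)) := by
      apply setIntegral_le_integral (hiSsum.const_mul η)
      filter_upwards with y
      exact mul_nonneg hη0 (mul_nonneg (gauss_nonneg _ _ _) (add_nonneg (hf0 y) (hf0 x0)))
    have h3 : (∫ y, η * (gauss m S y * (f y + f x0))) =
        η * ((∫ y, gauss m S y * f y) + f x0) := by
      rw [integral_const_mul]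
      congr 1
      rw [show (fun y => gauss m S y * (f y + f x0)) =
          fun y => gauss m S y * f y + gauss m S y * f x0 from funext fun y => by ring,
        integral_add hiSf (higS.mul_const _), integral_mul_const, integral_gauss m hS, one_mul]
    linarith
  -- shift bound
  have hshift : (∫ y, gauss m S y * f y) ≤
      K * ((∫ y, gauss (x0-1) S y * f y) + ∫ y, gauss (x0+1) S y * f y) := by
    have hia : Integrable (fun y => gauss (x0-1) S y * f y) := hint _ S hS le_rfl
    have hib : Integrable (fun y => gauss (x0+1) S y * f y) := hint _ S hS le_rfl
    have hiK : Integrable (fun y => K * ((gauss (x0-1) S y + gauss (x0+1) S y) * f y)) := by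
      have := (hia.add hib).const_mul K
      simpa [add_mul, mul_add] using this
    have h1 : ∀ y, gauss m S y * f y ≤ K * ((gauss (x0-1) S y + gauss (x0+1) S y) * f y) := by
      intro y
      have hmab : x0 - 1 ≤ m ∧ m ≤ x0 + 1 :=
        ⟨by linarith [(abs_le.1 hm).1], by linarith [(abs_le.1 hm).2]⟩
      have := gauss_le_shift hS le_rfl hmab.1 hmab.2 (y := y)
      rw [div_self hS.ne', Real.sqrt_one, one_mul,
        show x0 + 1 - (x0 - 1) = (2:ℝ) by ring] at this
      calc gauss m S y * f y ≤ (K * (gauss (x0-1) S y + gauss (x0+1) S y)) * f y :=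
            mul_le_mul_of_nonneg_right this (hf0 y)
        _ = K * ((gauss (x0-1) S y + gauss (x0+1) S y) * f y) := by ring
    have h2 := integral_mono hiSf hiK h1
    have h3 : (∫ y, K * ((gauss (x0-1) S y + gauss (x0+1) S y) * f y)) =
        K * ((∫ y, gauss (x0-1) S y * f y) + ∫ y, gauss (x0+1) S y * f y) := by
      rw [integral_const_mul]
      congr 1
      rw [show (fun y => (gauss (x0-1) S y + gauss (x0+1) S y) * f y) =
          fun y => gauss (x0-1) S y * f y + gauss (x0+1) S y * f y from funext fun y => by ring,
        integral_add hia hib]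
    linarith
  have hfx0 : 0 ≤ f x0 := hf0 x0
  have hKpos : (0:ℝ) < K := Real.exp_pos _
  calc |∫ y, gauss m s2 y * (f y - f x0)| ≤ ∫ y, |gauss m s2 y * (f y - f x0)| := habs
    _ = _ + _ := hsplit
    _ ≤ ε1 + η * ((∫ y, gauss m S y * f y) + f x0) := by linarith
    _ ≤ ε1 + η * (K * ((∫ y, gauss (x0-1) S y * f y) + ∫ y, gauss (x0+1) S y * f y) + f x0) := by
        have := mul_le_mul_of_nonneg_left (by linarith : (∫ y, gauss m S y * f y) + f x0 ≤
          K * ((∫ y, gauss (x0-1) S y * f y) + ∫ y, gauss (x0+1) S y * f y) + f x0) hη0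
        linarith

/-- If `f` is a continuous nonnegative payoff with finite
European values on `[0,T0] × ℝ` and the infimum defining the embedded American
option `am_{T0}(f)` is attained at a continuous curve `θ̆`, then
`x ↦ am_{T0}(f)(x)` is continuous. -/
theorem embedded_American_continuous
    (r σ T0 : ℝ) (hr : 0 ≤ r) (hσ : 0 < σ) (hT0 : 0 < T0)
    (f : ℝ → ℝ) (hfc : Continuous f) (hf0 : ∀ x, 0 ≤ f x)
    (hfint : ∀ θ ∈ Set.Ioc (0 : ℝ) T0, ∀ x : ℝ,
      Integrable (fun y => gauss (x + (r - σ ^ 2 / 2) * θ) (σ ^ 2 * θ) y * f y))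
    (θbr : ℝ → ℝ) (hθc : Continuous θbr) (hθmem : ∀ x, θbr x ∈ Set.Icc (0 : ℝ) T0)
    (hmin : ∀ x : ℝ, (⨅ θ : Set.Icc (0 : ℝ) T0, vEu r σ f θ.1 x) = vEu r σ f (θbr x) x) :
    Continuous (fun x => ⨅ θ : Set.Icc (0 : ℝ) T0, vEu r σ f θ.1 x) := by
  have hσ2 : (0:ℝ) < σ^2 := by positivity
  set c : ℝ := r - σ^2/2 with hc
  set S : ℝ := σ^2 * T0 with hSdef
  have hS : 0 < S := by positivity
  have hint : ∀ (m s2 : ℝ), 0 < s2 → s2 ≤ S → Integrable (fun y => gauss m s2 y * f y) := by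
    intro m s2 h1 h2
    have hθ : s2 / σ^2 ∈ Set.Ioc (0:ℝ) T0 := by
      constructor
      · positivity
      · rw [div_le_iff₀ hσ2]; linarith [h2]
    have h := hfint _ hθ (m - c * (s2/σ^2))
    rw [show m - c*(s2/σ^2) + c*(s2/σ^2) = m from by ring,
      show σ^2 * (s2/σ^2) = s2 from by field_simp] at h
    exact h
  -- continuity of the value function on the strip
  have key : ContinuousOn (fun p : ℝ × ℝ => vEu r σ f p.1 p.2)
      (Set.Icc 0 T0 ×ˢ (Set.univ : Set ℝ)) := by
    rintro ⟨θ0, x0⟩ hp0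
    have hθ0mem : θ0 ∈ Set.Icc (0:ℝ) T0 := hp0.1
    set s : Set (ℝ × ℝ) := Set.Icc 0 T0 ×ˢ (Set.univ : Set ℝ) with hsdef
    have hfst : Tendsto (fun p : ℝ × ℝ => p.1) (nhdsWithin (θ0, x0) s) (nhds θ0) :=
      (continuous_fst.tendsto _).mono_left nhdsWithin_le_nhds
    have hsnd : Tendsto (fun p : ℝ × ℝ => p.2) (nhdsWithin (θ0, x0) s) (nhds x0) :=
      (continuous_snd.tendsto _).mono_left nhdsWithin_le_nhds
    have hmemL : ∀ᶠ p in nhdsWithin (θ0, x0) s, p ∈ s := eventually_mem_nhdsWithin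
    rcases eq_or_lt_of_le hθ0mem.1 with hzero | hpos
    · -- θ0 = 0
      rw [ContinuousWithinAt, ← hzero]
      rw [show vEu r σ f 0 x0 = f x0 from by rw [vEu, if_pos rfl]]
      rw [Metric.tendsto_nhdsWithin_nhds]
      intro ε hε
      -- δ1 from continuity of f
      obtain ⟨δ', hδ'pos, hδ'⟩ := Metric.continuousAt_iff.mp (hfc.continuousAt (x := x0))
        (ε/4) (by positivity)
      set δ1 : ℝ := min (δ'/2) 1 with hδ1def
      have hδ1 : 0 < δ1 := lt_min (by positivity) one_pos
      have hδ11 : δ1 ≤ 1 := min_le_right _ _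
      have hfδ : ∀ y, |y - x0| ≤ δ1 → |f y - f x0| ≤ ε/4 := by
        intro y hy
        have : dist y x0 < δ' := by
          rw [Real.dist_eq]
          calc |y - x0| ≤ δ1 := hy
            _ ≤ δ'/2 := min_le_left _ _
            _ < δ' := by linarith
        have := hδ' this
        rw [Real.dist_eq] at this
        linarith
      set Ia : ℝ := ∫ y, gauss (x0-1) S y * f y with hIa
      set Ib : ℝ := ∫ y, gauss (x0+1) S y * f y with hIb
      have hIa0 : 0 ≤ Ia := integral_nonneg fun y => mul_nonneg (gauss_nonneg _ _ _) (hf0 y)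
      have hIb0 : 0 ≤ Ib := integral_nonneg fun y => mul_nonneg (gauss_nonneg _ _ _) (hf0 y)
      set C1 : ℝ := Real.exp ((2:ℝ)^2/(2*S)) * (Ia + Ib) + f x0 + 1 with hC1
      have hC1pos : 0 < C1 := by
        rw [hC1]
        have h1 : 0 ≤ Real.exp ((2:ℝ)^2/(2*S)) * (Ia + Ib) :=
          mul_nonneg (Real.exp_pos _).le (by linarith)
        linarith [hf0 x0]
      -- δ2 from eta_tendsto
      have hetat := eta_tendsto hS (k := (δ1/2)^2) (by positivity)
      rw [Metric.tendsto_nhdsWithin_nhds] at hetat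
      obtain ⟨δ2, hδ2pos, hδ2⟩ := hetat (ε/(4*C1)) (by positivity)
      -- δ3 from discount factor
      have hdisc : ContinuousAt (fun θ : ℝ => (1 - Real.exp (-(r*θ))) * f x0) 0 := by fun_prop
      rw [Metric.continuousAt_iff] at hdisc
      obtain ⟨δ3, hδ3pos, hδ3⟩ := hdisc (ε := ε/4) (by positivity)
      set cA : ℝ := |c| + 1 with hcA
      have hcApos : (0:ℝ) < cA := by positivity
      refine ⟨min (min δ3 (δ2/σ^2)) (min (δ1/(4*cA)) (δ1/4)), by positivity, ?_⟩
      rintro ⟨θ, x⟩ hpmem hdist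
      have hθmem' : θ ∈ Set.Icc (0:ℝ) T0 := hpmem.1
      rw [Prod.dist_eq, max_lt_iff] at hdist
      have hdθ : |θ| < min (min δ3 (δ2/σ^2)) (min (δ1/(4*cA)) (δ1/4)) := by
        have h1 := hdist.1
        simpa [Real.dist_eq] using h1
      have hdx : |x - x0| < min (min δ3 (δ2/σ^2)) (min (δ1/(4*cA)) (δ1/4)) := by
        have h1 := hdist.2
        simpa [Real.dist_eq] using h1
      have hθnn : 0 ≤ θ := hθmem'.1
      have hθabs : |θ| = θ := abs_of_nonneg hθnn
      rcases eq_or_lt_of_le hθnn with hθz | hθpos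
      · -- θ = 0
        rw [show vEu r σ f θ x = f x from by rw [← hθz, vEu, if_pos rfl]]
        rw [Real.dist_eq]
        have hx1 : |x - x0| ≤ δ1 := by
          have h2 : min (min δ3 (δ2/σ^2)) (min (δ1/(4*cA)) (δ1/4)) ≤ δ1/4 :=
            (min_le_right _ _).trans (min_le_right _ _)
          linarith [hdx.le.trans h2]
        linarith [hfδ x hx1]
      · -- θ > 0
        have hs2pos : 0 < σ^2*θ := by positivity
        have hs2S : σ^2*θ ≤ S := by
          rw [hSdef]
          exact mul_le_mul_of_nonneg_left hθmem'.2 hσ2.le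
        have hθlt := hθabs ▸ hdθ
        have hθδ3 : θ < δ3 :=
          lt_of_lt_of_le hθlt ((min_le_left _ _).trans (min_le_left _ _))
        have hθδ2 : σ^2*θ < δ2 := by
          have h1 : θ < δ2/σ^2 :=
            lt_of_lt_of_le hθlt ((min_le_left _ _).trans (min_le_right _ _))
          calc σ^2*θ < σ^2*(δ2/σ^2) := mul_lt_mul_of_pos_left h1 hσ2
            _ = δ2 := by field_simp
        have hθδ1 : θ ≤ δ1/(4*cA) :=
          (lt_of_lt_of_le hθlt ((min_le_right _ _).trans (min_le_left _ _))).le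
        have hxδ1 : |x - x0| ≤ δ1/4 :=
          (lt_of_lt_of_le hdx ((min_le_right _ _).trans (min_le_right _ _))).le
        have hm : |x + c*θ - x0| ≤ δ1/2 := by
          have h1 : |x + c*θ - x0| ≤ |x - x0| + |c| *θ := by
            calc |x + c*θ - x0| = |(x - x0) + c*θ| := by congr 1; ring
              _ ≤ |x - x0| + |c*θ| := abs_add_le _ _
              _ = |x - x0| + |c| *θ := by rw [abs_mul, abs_of_nonneg hθnn]
          have h2 : |c| *θ ≤ δ1/4 := by
            have h3 : |c| *θ ≤ |c| *(δ1/(4*cA)) := mul_le_mul_of_nonneg_left hθδ1 (abs_nonneg c)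
            have h4 : |c| *(δ1/(4*cA)) ≤ δ1/4 := by
              rw [hcA, mul_comm, div_mul_eq_mul_div, div_le_div_iff₀ (by positivity) (by positivity)]
              nlinarith [abs_nonneg c, hδ1.le]
            linarith
          linarith
        have happ := peak_estimate hS f hf0 hint x0 hδ1 hδ11
          (by positivity : (0:ℝ) ≤ ε/4) hfδ hm hs2pos hs2S
        rw [← hIa, ← hIb] at happ
        set η : ℝ := Real.sqrt (S/(σ^2*θ)) *
          Real.exp (-((δ1/2)^2) * (1/(2*(σ^2*θ)) - 1/(2*S))) with hηdef
        have hηnn : 0 ≤ η := by rw [hηdef]; positivity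
        have hηlt : η < ε/(4*C1) := by
          have h1 := hδ2 (x := σ^2*θ) hs2pos (by
            rw [Real.dist_eq, sub_zero, abs_of_pos hs2pos]; exact hθδ2)
          rw [Real.dist_eq, sub_zero] at h1
          calc η ≤ |η|  := le_abs_self _
            _ < ε/(4*C1) := h1
        have hW : |(∫ y, gauss (x + c*θ) (σ^2*θ) y * f y) - f x0| ≤ ε/4 + ε/4 := by
          have hKC : Real.exp ((2:ℝ)^2/(2*S)) * (Ia + Ib) + f x0 ≤ C1 := by
            rw [hC1]; linarith
          have h2 : η * (Real.exp ((2:ℝ)^2/(2*S)) * (Ia + Ib) + f x0) ≤ η * C1 :=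
            mul_le_mul_of_nonneg_left hKC hηnn
          have h3 : η * C1 ≤ (ε/(4*C1))*C1 := mul_le_mul_of_nonneg_right hηlt.le (by linarith)
          have h4 : (ε/(4*C1))*C1 = ε/4 := by field_simp
          linarith [happ]
        have hd : (1 - Real.exp (-(r*θ))) * f x0 < ε/4 := by
          have h1 := hδ3 (x := θ) (by
            rw [Real.dist_eq, sub_zero, hθabs]; exact hθδ3)
          simp only [mul_zero, neg_zero, Real.exp_zero, sub_self, zero_mul] at h1
          rw [Real.dist_eq, sub_zero] at h1
          calc (1 - Real.exp (-(r*θ))) * f x0 ≤ |(1 - Real.exp (-(r*θ))) * f x0| :=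
              le_abs_self _
            _ < ε/4 := h1
        have hexp1 : Real.exp (-(r*θ)) ≤ 1 := by
          rw [Real.exp_le_one_iff]
          nlinarith [mul_nonneg hr hθnn]
        have hexp0 : (0:ℝ) < Real.exp (-(r*θ)) := Real.exp_pos _
        rw [show vEu r σ f θ x =
            Real.exp (-(r*θ)) * ∫ y, gauss (x + c*θ) (σ^2*θ) y * f y from by
          rw [vEu, if_neg hθpos.ne']]
        rw [Real.dist_eq]
        have habs2 : |Real.exp (-(r*θ)) * (∫ y, gauss (x + c*θ) (σ^2*θ) y * f y) - f x0| ≤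
            Real.exp (-(r*θ)) * |(∫ y, gauss (x + c*θ) (σ^2*θ) y * f y) - f x0| +
            (1 - Real.exp (-(r*θ))) * f x0 := by
          calc |Real.exp (-(r*θ)) * (∫ y, gauss (x + c*θ) (σ^2*θ) y * f y) - f x0|
              = |Real.exp (-(r*θ)) * ((∫ y, gauss (x + c*θ) (σ^2*θ) y * f y) - f x0) +
                (Real.exp (-(r*θ)) - 1) * f x0| := by congr 1; ring
            _ ≤ |Real.exp (-(r*θ)) * ((∫ y, gauss (x + c*θ) (σ^2*θ) y * f y) - f x0)| +
                |(Real.exp (-(r*θ)) - 1) * f x0| := abs_add_le _ _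
            _ = Real.exp (-(r*θ)) * |(∫ y, gauss (x + c*θ) (σ^2*θ) y * f y) - f x0| +
                (1 - Real.exp (-(r*θ))) * f x0 := by
                rw [abs_mul, abs_mul, abs_of_pos hexp0, abs_of_nonpos (a := Real.exp (-(r*θ)) - 1) (by linarith),
                  abs_of_nonneg (hf0 x0)]
                ring
        have hmul : Real.exp (-(r*θ)) * |(∫ y, gauss (x + c*θ) (σ^2*θ) y * f y) - f x0| ≤
            1 * (ε/4 + ε/4) :=
          mul_le_mul hexp1 hW (abs_nonneg _) one_pos.le
        calc |Real.exp (-(r*θ)) * (∫ y, gauss (x + c*θ) (σ^2*θ) y * f y) - f x0| ≤ _ := habs2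
          _ ≤ 1 * (ε/4 + ε/4) + ε/4 := by linarith
          _ < ε := by linarith
    · -- θ0 > 0
      have hθ0T : θ0 ≤ T0 := hθ0mem.2
      set a : ℝ := x0 - (1 + |c| * T0) with ha
      set b : ℝ := x0 + (1 + |c| * T0) with hb
      set CB : ℝ := Real.sqrt (S/(σ^2*(θ0/2))) * Real.exp ((b-a)^2/(2*S)) with hCB
      have hev1 : ∀ᶠ p in nhdsWithin (θ0, x0) s, θ0/2 < p.1 :=
        hfst.eventually (eventually_gt_nhds (by linarith))
      have hW : Tendsto (fun p : ℝ × ℝ => ∫ y, gauss (p.2 + c*p.1) (σ^2*p.1) y * f y)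
          (nhdsWithin (θ0, x0) s) (nhds (∫ y, gauss (x0 + c*θ0) (σ^2*θ0) y * f y)) := by
        refine tendsto_integral_filter_of_dominated_convergence
          (fun y => CB * ((gauss a S y + gauss b S y) * f y)) ?_ ?_ ?_ ?_
        · exact Eventually.of_forall fun p =>
            ((continuous_gauss_y _ _).mul hfc).aestronglyMeasurable
        · have hev2 : ∀ᶠ p in nhdsWithin (θ0, x0) s, |p.2 - x0| < 1 := by
            have h1 : ∀ᶠ z in nhds x0, |z - x0| < 1 := by
              filter_upwards [Metric.ball_mem_nhds x0 one_pos] with z hz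
              simpa [Real.dist_eq] using hz
            exact hsnd.eventually h1
          filter_upwards [hmemL, hev1, hev2] with p hp h1 h2
          refine Filter.Eventually.of_forall fun y => ?_
          have hp1pos : 0 < p.1 := lt_trans (by linarith) h1
          have hpT : p.1 ≤ T0 := hp.1.2
          have hs2p : 0 < σ^2 * p.1 := mul_pos hσ2 hp1pos
          have hs2S : σ^2 * p.1 ≤ S := by
            rw [hSdef]; exact mul_le_mul_of_nonneg_left hpT hσ2.le
          have h3 : |c * p.1| ≤ |c| * T0 := by
            rw [abs_mul, abs_of_nonneg hp1pos.le]
            exact mul_le_mul_of_nonneg_left hpT (abs_nonneg c)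
          have hmean1 : a ≤ p.2 + c * p.1 := by
            rw [ha]
            have := (abs_le.1 h3).1
            have := (abs_lt.1 h2).1
            linarith
          have hmean2 : p.2 + c * p.1 ≤ b := by
            rw [hb]
            have := (abs_le.1 h3).2
            have := (abs_lt.1 h2).2
            linarith
          have hgb := gauss_le_shift hs2p hs2S hmean1 hmean2 (y := y)
          have hsq : Real.sqrt (S/(σ^2*p.1)) ≤ Real.sqrt (S/(σ^2*(θ0/2))) := by
            apply Real.sqrt_le_sqrt
            have hle : σ^2*(θ0/2) ≤ σ^2*p.1 := by nlinarith
            rw [div_le_div_iff₀ (by positivity) (by positivity)]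
            nlinarith [mul_le_mul_of_nonneg_left hle hS.le]
          rw [Real.norm_eq_abs, abs_of_nonneg (mul_nonneg (gauss_nonneg _ _ _) (hf0 y))]
          calc gauss (p.2 + c*p.1) (σ^2*p.1) y * f y
              ≤ (Real.sqrt (S/(σ^2*p.1)) * Real.exp ((b-a)^2/(2*S)) *
                  (gauss a S y + gauss b S y)) * f y :=
                mul_le_mul_of_nonneg_right hgb (hf0 y)
            _ ≤ (Real.sqrt (S/(σ^2*(θ0/2))) * Real.exp ((b-a)^2/(2*S)) *
                  (gauss a S y + gauss b S y)) * f y := by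
                have hgg : 0 ≤ gauss a S y + gauss b S y :=
                  add_nonneg (gauss_nonneg _ _ _) (gauss_nonneg _ _ _)
                exact mul_le_mul_of_nonneg_right (mul_le_mul_of_nonneg_right
                  (mul_le_mul_of_nonneg_right hsq (Real.exp_pos _).le) hgg) (hf0 y)
            _ = CB * ((gauss a S y + gauss b S y) * f y) := by rw [hCB]; ring
        · have h5 := ((hint a S hS le_rfl).add (hint b S hS le_rfl)).const_mul CB
          exact h5.congr (Filter.Eventually.of_forall fun y => by
            simp only [Pi.add_apply]; ring)
        · refine Filter.Eventually.of_forall fun y => ?_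
          have h2 : ContinuousAt (fun p : ℝ × ℝ => ((p.2 + c*p.1 : ℝ), (σ^2*p.1 : ℝ)))
            (θ0, x0) := by fun_prop
          have hc1 : ContinuousAt (fun p : ℝ × ℝ => gauss (p.2 + c*p.1) (σ^2*p.1) y)
              (θ0, x0) := by
            have h6 : ContinuousAt (fun q : ℝ × ℝ => gauss q.1 q.2 y)
                ((x0 + c*θ0 : ℝ), (σ^2*θ0 : ℝ)) :=
              continuousAt_gauss y (by show (0:ℝ) < σ^2*θ0; positivity)
            exact ContinuousAt.comp
              (f := fun p : ℝ × ℝ => ((p.2 + c*p.1 : ℝ), (σ^2*p.1 : ℝ))) h6 h2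
          exact ((hc1.mul continuousAt_const).tendsto).mono_left nhdsWithin_le_nhds
      have hexp : Tendsto (fun p : ℝ × ℝ => Real.exp (-(r * p.1))) (nhdsWithin (θ0,x0) s)
          (nhds (Real.exp (-(r * θ0)))) :=
        (((by fun_prop : Continuous fun p : ℝ × ℝ => Real.exp (-(r * p.1)))).tendsto
          ((θ0, x0) : ℝ × ℝ)).mono_left nhdsWithin_le_nhds
      have hmulT := hexp.mul hW
      rw [ContinuousWithinAt,
        show vEu r σ f θ0 x0 =
          Real.exp (-(r*θ0)) * ∫ y, gauss (x0 + c*θ0) (σ^2*θ0) y * f y from by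
            rw [vEu, if_neg hpos.ne']]
      apply Filter.Tendsto.congr' _ hmulT
      filter_upwards [hev1] with p h1
      rw [vEu, if_neg (ne_of_gt (lt_trans (by linarith) h1))]
  have hfun : (fun x => ⨅ θ : Set.Icc (0:ℝ) T0, vEu r σ f θ.1 x) =
      fun x => vEu r σ f (θbr x) x := funext hmin
  rw [hfun]
  exact key.comp_continuous (hθc.prodMk continuous_id) (fun x => ⟨hθmem x, Set.mem_univ x⟩)
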